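/- If ξ_1, ξ_2, … are i.i.d. real random variables with mean 0 and finite 2k-th moment, then for every ε > 0, P(|Σ_{i=1}^N ξ_i / N| > ε) = O(N^{-k}) as N → ∞. -/

import Mathlib

open MeasureTheory ProbabilityTheory

lemma indep_prod_integral {Ω : Type*} [MeasureSpace Ω] [IsProbabilityMeasure (ℙ : Measure Ω)]
    (g : ℕ → Ω → ℝ) (hindep : iIndepFun g ℙ)
    (hgmeas : ∀ i, Measurable (g i)) (hgint : ∀ i, Integrable (g i) ℙ) (s : Finset ℕ) :
    Integrable (fun ω => ∏ i ∈ s, g i ω) ℙ ∧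
      ∫ ω, ∏ i ∈ s, g i ω ∂ℙ = ∏ i ∈ s, ∫ ω, g i ω ∂ℙ := by
  classical
  induction s using Finset.induction_on with
  | empty => simp
  | @insert a s ha ih =>
    have hfun : (∏ j ∈ s, g j) = fun ω => ∏ i ∈ s, g i ω := by
      funext ω; simp [Finset.prod_apply]
    have hind : IndepFun (g a) (fun ω => ∏ i ∈ s, g i ω) ℙ := by
      rw [← hfun]
      exact (hindep.indepFun_finset_prod_of_notMem hgmeas ha).symm
    have hprod : (fun ω => ∏ i ∈ insert a s, g i ω)
        = g a * (fun ω => ∏ i ∈ s, g i ω) := by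
      funext ω; rw [Finset.prod_insert ha]; rfl
    constructor
    · rw [hprod]
      exact hind.integrable_mul (hgint a) ih.1
    · rw [hprod, hind.integral_mul_eq_mul_integral (hgint a).1 ih.1.1,
        Finset.prod_insert ha, ← ih.2]

lemma count_bound (k N : ℕ) (hk : 0 < k) :
    ((Fintype.piFinset (fun _ : Fin (2 * k) => Finset.range N)).filter
      (fun p => (Finset.univ.image p).card ≤ k)).card ≤ k ^ (2 * k) * N ^ k := by
  classical
  set A := Fintype.piFinset (fun _ : Fin (2 * k) => Finset.range N)
  have hsub : A.filter (fun p => (Finset.univ.image p).card ≤ k) ⊆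
      ((Finset.univ : Finset (Fin (2 * k) → Fin k)) ×ˢ
        (Fintype.piFinset (fun _ : Fin k => Finset.range N))).image
        (fun q => q.2 ∘ q.1) := by
    intro p hp
    rw [Finset.mem_filter] at hp
    obtain ⟨hpA, hpc⟩ := hp
    set s : Finset ℕ := Finset.univ.image p with hs
    have hpos : 0 < 2 * k := by omega
    have hmem : ∀ t, p t ∈ s := fun t => Finset.mem_image_of_mem p (Finset.mem_univ t)
    have hrange : ∀ x ∈ s, x ∈ Finset.range N := by
      intro x hx
      rw [hs, Finset.mem_image] at hx
      obtain ⟨t, _, rfl⟩ := hx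
      exact Fintype.mem_piFinset.mp hpA t
    set e := s.orderIsoOfFin (rfl : s.card = s.card) with he
    set g : Fin k → ℕ := fun j => if hj : (j : ℕ) < s.card then (e ⟨j, hj⟩ : ℕ)
      else p ⟨0, hpos⟩ with hg
    set h : Fin (2 * k) → Fin k := fun t =>
      ⟨(e.symm ⟨p t, hmem t⟩ : Fin s.card), lt_of_lt_of_le (Fin.is_lt _) hpc⟩ with hh
    have gval : ∀ (j : Fin k) (hj : (j : ℕ) < s.card), g j = (e ⟨j, hj⟩ : ℕ) :=
      fun j hj => dif_pos hj
    refine Finset.mem_image.mpr ⟨⟨h, g⟩, ?_, ?_⟩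
    · rw [Finset.mem_product]
      refine ⟨Finset.mem_univ _, Fintype.mem_piFinset.mpr fun j => ?_⟩
      show g j ∈ Finset.range N
      by_cases hj : (j : ℕ) < s.card
      · rw [gval j hj]
        exact hrange _ (e ⟨j, hj⟩).2
      · rw [show g j = p ⟨0, hpos⟩ from dif_neg hj]
        exact hrange _ (hmem _)
    · funext t
      show g (h t) = p t
      have hj : ((h t : Fin k) : ℕ) < s.card := Fin.is_lt (e.symm ⟨p t, hmem t⟩)
      rw [gval (h t) hj]
      have h3 : (⟨((h t : Fin k) : ℕ), hj⟩ : Fin s.card) = e.symm ⟨p t, hmem t⟩ := by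
        apply Fin.ext; rfl
      rw [h3, OrderIso.apply_symm_apply]
  calc (A.filter (fun p => (Finset.univ.image p).card ≤ k)).card
      ≤ _ := Finset.card_le_card hsub
    _ ≤ ((Finset.univ : Finset (Fin (2 * k) → Fin k)) ×ˢ
        (Fintype.piFinset (fun _ : Fin k => Finset.range N))).card := Finset.card_image_le
    _ = k ^ (2 * k) * N ^ k := by
        rw [Finset.card_product, Finset.card_univ, Fintype.card_fun]
        simp [Fintype.card_piFinset]

/-- For i.i.d. centered real random variables with finite 2k-th moment,
P(|Σ_{i<N} ξ_i / N| > ε) = O(N^{-k}). -/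
theorem stmt2 {Ω : Type*} [MeasureSpace Ω] [IsProbabilityMeasure (ℙ : Measure Ω)]
    (ξ : ℕ → Ω → ℝ) (k : ℕ) (hk : 0 < k)
    (hmeas : ∀ i, Measurable (ξ i))
    (hindep : iIndepFun ξ ℙ)
    (hident : ∀ i, Measure.map (ξ i) ℙ = Measure.map (ξ 0) ℙ)
    (hmean : ∫ ω, ξ 0 ω ∂ℙ = 0)
    (hmom : Integrable (fun ω => |ξ 0 ω| ^ (2 * k)) ℙ)
    (ε : ℝ) (hε : 0 < ε) :
    ∃ C : ℝ, ∀ N : ℕ, 1 ≤ N →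
      (ℙ {ω | ε < |(∑ i ∈ Finset.range N, ξ i ω) / N|}).toReal ≤ C / (N : ℝ) ^ k := by
  classical
  have ptbd : ∀ (x : ℝ) (c : ℕ), c ≤ 2 * k → |x| ^ c ≤ 1 + |x| ^ (2 * k) := by
    intro x c hc
    have h2 : (0:ℝ) ≤ |x| ^ (2 * k) := pow_nonneg (abs_nonneg x) _
    rcases le_total (|x|) 1 with h | h
    · have h1 : |x| ^ c ≤ 1 := pow_le_one₀ (abs_nonneg x) h
      linarith
    · have h1 : |x| ^ c ≤ |x| ^ (2 * k) := pow_le_pow_right₀ h hc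
      linarith
  set m : ℝ := ∫ ω, |ξ 0 ω| ^ (2 * k) ∂ℙ with hm
  have hm0 : 0 ≤ m := integral_nonneg (fun ω => pow_nonneg (abs_nonneg _) _)
  set M : ℝ := 1 + m with hM
  have hM1 : (1:ℝ) ≤ M := by simp only [hM]; linarith
  have hMbd : Integrable (fun ω => 1 + |ξ 0 ω| ^ (2 * k)) ℙ := (integrable_const 1).add hmom
  have hint0 : ∀ c, c ≤ 2 * k → Integrable (fun ω => ξ 0 ω ^ c) ℙ := by
    intro c hc
    refine hMbd.mono ((hmeas 0).pow_const c).aestronglyMeasurable (ae_of_all _ fun ω => ?_)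
    rw [Real.norm_eq_abs, Real.norm_eq_abs, abs_pow]
    calc |ξ 0 ω| ^ c ≤ 1 + |ξ 0 ω| ^ (2 * k) := ptbd _ _ hc
      _ ≤ |1 + |ξ 0 ω| ^ (2 * k)| := le_abs_self _
  have hinti : ∀ i c, c ≤ 2 * k → Integrable (fun ω => ξ i ω ^ c) ℙ := by
    intro i c hc
    have h0 := (integrable_map_measure ((measurable_id.pow_const c).aestronglyMeasurable)
        (hmeas 0).aemeasurable).mpr (hint0 c hc)
    rw [← hident i] at h0
    exact (integrable_map_measure ((measurable_id.pow_const c).aestronglyMeasurable)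
        (hmeas i).aemeasurable).mp h0
  have hval : ∀ i c, ∫ ω, ξ i ω ^ c ∂ℙ = ∫ ω, ξ 0 ω ^ c ∂ℙ := by
    intro i c
    have h1 : ∫ ω, ξ i ω ^ c ∂ℙ = ∫ x, x ^ c ∂(Measure.map (ξ i) ℙ) :=
      (integral_map (hmeas i).aemeasurable
        (measurable_id.pow_const c).aestronglyMeasurable).symm
    rw [h1, hident i]
    exact integral_map (hmeas 0).aemeasurable
      (measurable_id.pow_const c).aestronglyMeasurable
  have hbd : ∀ c, c ≤ 2 * k → |∫ ω, ξ 0 ω ^ c ∂ℙ| ≤ M := by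
    intro c hc
    calc |∫ ω, ξ 0 ω ^ c ∂ℙ| ≤ ∫ ω, |ξ 0 ω ^ c| ∂ℙ := by
          simpa [Real.norm_eq_abs] using
            norm_integral_le_integral_norm (μ := (ℙ : Measure Ω)) (fun ω => ξ 0 ω ^ c)
      _ ≤ ∫ ω, (1 + |ξ 0 ω| ^ (2 * k)) ∂ℙ := by
          refine integral_mono (hint0 c hc).abs hMbd fun ω => ?_
          rw [abs_pow]; exact ptbd _ _ hc
      _ = M := by
          rw [integral_add (integrable_const 1) hmom]
          simp [hM, hm]
  refine ⟨(k:ℝ) ^ (2 * k) * M ^ (2 * k) / ε ^ (2 * k), fun N hN => ?_⟩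
  have hNpos : (0:ℝ) < N := by exact_mod_cast hN
  set A := Fintype.piFinset (fun _ : Fin (2 * k) => Finset.range N) with hA
  -- per-p analysis
  set cp : (Fin (2 * k) → ℕ) → ℕ → ℕ :=
    fun p b => (Finset.univ.filter (fun t => p t = b)).card with hcp
  have hcple : ∀ p b, cp p b ≤ 2 * k := by
    intro p b
    calc cp p b ≤ (Finset.univ : Finset (Fin (2 * k))).card := Finset.card_filter_le _ _
      _ = 2 * k := by simp
  have hprodeq : ∀ (p : Fin (2 * k) → ℕ) (ω : Ω),
      (∏ t, ξ (p t) ω) = ∏ b ∈ Finset.univ.image p, ξ b ω ^ cp p b := by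
    intro p ω
    exact Finset.prod_comp (fun b => ξ b ω) p
  have hkey : ∀ p : Fin (2 * k) → ℕ,
      Integrable (fun ω => ∏ t, ξ (p t) ω) ℙ ∧
      ∫ ω, ∏ t, ξ (p t) ω ∂ℙ = ∏ b ∈ Finset.univ.image p, ∫ ω, ξ 0 ω ^ cp p b ∂ℙ := by
    intro p
    have hfind : iIndepFun (fun b ω => ξ b ω ^ cp p b) ℙ :=
      hindep.comp (fun b x => x ^ cp p b) (fun b => measurable_id.pow_const _)
    have hmain := indep_prod_integral (fun b ω => ξ b ω ^ cp p b) hfind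
      (fun b => (hmeas b).pow_const _) (fun b => hinti b _ (hcple p b))
      (Finset.univ.image p)
    have heq : (fun ω => ∏ t, ξ (p t) ω)
        = fun ω => ∏ b ∈ Finset.univ.image p, ξ b ω ^ cp p b := funext fun ω => hprodeq p ω
    constructor
    · rw [heq]; exact hmain.1
    · rw [heq]
      rw [hmain.2]
      exact Finset.prod_congr rfl fun b _ => hval b _
  -- vanishing and bound
  set R : (Fin (2 * k) → ℕ) → Prop := fun p => ∀ b ∈ Finset.univ.image p, 2 ≤ cp p b with hR
  have hvanish : ∀ p : Fin (2 * k) → ℕ, ¬ R p → ∫ ω, ∏ t, ξ (p t) ω ∂ℙ = 0 := by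
    intro p hp
    rw [(hkey p).2]
    simp only [hR, not_forall] at hp
    obtain ⟨b, hb, hb2⟩ := hp
    refine Finset.prod_eq_zero hb ?_
    have hb1 : 1 ≤ cp p b := by
      rw [hcp]
      rw [Finset.one_le_card]
      rw [Finset.mem_image] at hb
      obtain ⟨t, _, rfl⟩ := hb
      exact ⟨t, Finset.mem_filter.mpr ⟨Finset.mem_univ t, rfl⟩⟩
    have : cp p b = 1 := by omega
    simp only [this, pow_one]
    exact hmean
  have habs : ∀ p : Fin (2 * k) → ℕ, |∫ ω, ∏ t, ξ (p t) ω ∂ℙ| ≤ M ^ (2 * k) := by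
    intro p
    rw [(hkey p).2, Finset.abs_prod]
    calc (∏ b ∈ Finset.univ.image p, |∫ ω, ξ 0 ω ^ cp p b ∂ℙ|)
        ≤ ∏ _b ∈ Finset.univ.image p, M :=
          Finset.prod_le_prod (fun b _ => abs_nonneg _) (fun b _ => hbd _ (hcple p b))
      _ = M ^ (Finset.univ.image p).card := Finset.prod_const M
      _ ≤ M ^ (2 * k) := by
          refine pow_le_pow_right₀ hM1 ?_
          calc (Finset.univ.image p).card ≤ (Finset.univ : Finset (Fin (2 * k))).card :=
              Finset.card_image_le
            _ = 2 * k := by simp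
  have hRcard : ∀ p : Fin (2 * k) → ℕ, R p → (Finset.univ.image p).card ≤ k := by
    intro p hp
    have hcard : (Finset.univ : Finset (Fin (2 * k))).card
        = ∑ b ∈ Finset.univ.image p, cp p b :=
      Finset.card_eq_sum_card_fiberwise
        (fun x _ => Finset.mem_image_of_mem _ (Finset.mem_univ x))
    have h1 : 2 * (Finset.univ.image p).card ≤ ∑ b ∈ Finset.univ.image p, cp p b := by
      calc 2 * (Finset.univ.image p).card = ∑ _b ∈ Finset.univ.image p, 2 := by
            rw [Finset.sum_const, smul_eq_mul, mul_comm]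
        _ ≤ _ := Finset.sum_le_sum hp
    have h2 : (Finset.univ : Finset (Fin (2 * k))).card = 2 * k := by simp
    omega
  -- integrability and bound of the 2k-th moment of the sum
  set S : Ω → ℝ := fun ω => ∑ i ∈ Finset.range N, ξ i ω with hS
  have hSexp : ∀ ω, S ω ^ (2 * k) = ∑ p ∈ A, ∏ t, ξ (p t) ω := by
    intro ω
    exact Finset.sum_pow' (Finset.range N) (fun i => ξ i ω) (2 * k)
  have hSfun : (fun ω => S ω ^ (2 * k)) = fun ω => ∑ p ∈ A, ∏ t, ξ (p t) ω :=
    funext hSexp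
  have hSint : Integrable (fun ω => S ω ^ (2 * k)) ℙ := by
    rw [hSfun]
    exact integrable_finset_sum A (fun p _ => (hkey p).1)
  have hSval : ∫ ω, S ω ^ (2 * k) ∂ℙ
      ≤ (k:ℝ) ^ (2 * k) * N ^ k * M ^ (2 * k) := by
    rw [hSfun, integral_finset_sum A (fun p _ => (hkey p).1)]
    have hstep : ∑ p ∈ A, ∫ ω, ∏ t, ξ (p t) ω ∂ℙ
        = ∑ p ∈ A.filter R, ∫ ω, ∏ t, ξ (p t) ω ∂ℙ := by
      refine (Finset.sum_filter_of_ne ?_).symm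
      intro p _ hne
      by_contra hpR
      exact hne (hvanish p hpR)
    rw [hstep]
    have hMpow : (0:ℝ) ≤ M ^ (2 * k) := by positivity
    calc ∑ p ∈ A.filter R, ∫ ω, ∏ t, ξ (p t) ω ∂ℙ
        ≤ ∑ p ∈ A.filter R, M ^ (2 * k) :=
          Finset.sum_le_sum (fun p _ => (abs_le.mp (habs p)).2)
      _ = ((A.filter R).card : ℝ) * M ^ (2 * k) := by
          rw [Finset.sum_const, nsmul_eq_mul]
      _ ≤ ((k ^ (2 * k) * N ^ k : ℕ) : ℝ) * M ^ (2 * k) := by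
          refine mul_le_mul_of_nonneg_right ?_ hMpow
          have hsubset : A.filter R ⊆ A.filter (fun p => (Finset.univ.image p).card ≤ k) := by
            intro p hp
            rw [Finset.mem_filter] at hp ⊢
            exact ⟨hp.1, hRcard p hp.2⟩
          have := le_trans (Finset.card_le_card hsubset) (count_bound k N hk)
          exact_mod_cast this
      _ = (k:ℝ) ^ (2 * k) * N ^ k * M ^ (2 * k) := by push_cast; ring
  -- Markov
  have hSnn : ∀ ω, 0 ≤ S ω ^ (2 * k) := fun ω => (even_two_mul k).pow_nonneg _
  have hsub : {ω | ε < |S ω / N|} ⊆ {ω | (ε * N) ^ (2 * k) ≤ S ω ^ (2 * k)} := by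
    intro ω hω
    simp only [Set.mem_setOf_eq] at hω ⊢
    have h1 : ε * N ≤ |S ω| := by
      rw [abs_div, abs_of_pos hNpos, lt_div_iff₀ hNpos] at hω
      exact hω.le
    calc (ε * N) ^ (2 * k) ≤ |S ω| ^ (2 * k) :=
        pow_le_pow_left₀ (by positivity) h1 _
      _ = S ω ^ (2 * k) := by
          rw [← abs_pow, abs_of_nonneg (hSnn ω)]
  have hmark := mul_meas_ge_le_integral_of_nonneg (ae_of_all _ hSnn) hSint ((ε * N) ^ (2 * k))
  have hmono : (ℙ {ω | ε < |S ω / N|}).toReal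
      ≤ (ℙ {ω | (ε * N) ^ (2 * k) ≤ S ω ^ (2 * k)}).toReal :=
    ENNReal.toReal_mono (measure_ne_top _ _) (measure_mono hsub)
  have hεN : (0:ℝ) < (ε * N) ^ (2 * k) := by positivity
  have hfinal : (ℙ {ω | ε < |S ω / N|}).toReal
      ≤ ((k:ℝ) ^ (2 * k) * N ^ k * M ^ (2 * k)) / (ε * N) ^ (2 * k) := by
    rw [le_div_iff₀ hεN]
    calc (ℙ {ω | ε < |S ω / N|}).toReal * (ε * N) ^ (2 * k)
        ≤ (ℙ {ω | (ε * N) ^ (2 * k) ≤ S ω ^ (2 * k)}).toReal * (ε * N) ^ (2 * k) :=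
          mul_le_mul_of_nonneg_right hmono hεN.le
      _ = (ε * N) ^ (2 * k) * (ℙ {ω | (ε * N) ^ (2 * k) ≤ S ω ^ (2 * k)}).toReal := by ring
      _ ≤ ∫ ω, S ω ^ (2 * k) ∂ℙ := hmark
      _ ≤ _ := hSval
  refine le_trans hfinal (le_of_eq ?_)
  rw [mul_pow, show 2 * k = k + k from two_mul k, pow_add, pow_add]
  have hNk : (0:ℝ) < (N:ℝ) ^ k := by positivity
  field_simp
  ring
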